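/- arXiv:math/0306045 — 2 statements merged into one kernel-verified Lean document; each statement's English description precedes it below -/
import Mathlib

section
/- In the sequential active-vertex construction of a multitype Galton-Watson tree restricted to recurrent types (start with one active vertex of type a at size 0; at each step pick an active vertex uniformly, provide it offspring by the restricted kernel 𝒬_r given its type, add G(v)+1 to the size, deactivate it and activate its offspring), let p_{a,b}(n) denote the probability that when the size equals n there is exactly one active vertex, of type b. Then for all a₁, a₂, a₃ ∈ 𝒳_r and positive integers n₁, n₂, one has p_{a₁,a₂}(n₁)·p_{a₂,a₃}(n₂) ≤ p_{a₁,a₃}(n₁ + n₂). -/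
open scoped ENNReal NNReal BigOperators
open Filter

/-- Finite rooted planar trees with vertex types in `𝒳`. -/
inductive PTree (𝒳 : Type*) where
  | node : 𝒳 → List (PTree 𝒳) → PTree 𝒳

namespace PTree

variable {𝒳 : Type*}

/-- The type of the root. -/
def root : PTree 𝒳 → 𝒳
  | node a _ => a

/-- The list of subtrees rooted at the children of the root (left to right). -/
def children : PTree 𝒳 → List (PTree 𝒳)
  | node _ ts => ts

/-- The types of the children of the root, from left to right. -/
def childLabels (t : PTree 𝒳) : List 𝒳 := t.children.map root

/-- The list of all subtrees `X^v`, `v` a vertex of the tree. -/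
def subtrees : PTree 𝒳 → List (PTree 𝒳)
  | node a ts => node a ts :: (ts.attach.map (fun s => subtrees s.1)).flatten
decreasing_by
  have := List.sizeOf_lt_of_mem s.2
  simp only [PTree.node.sizeOf_spec]
  omega

/-- Number of vertices. -/
def size (t : PTree 𝒳) : ℕ := t.subtrees.length

/-- The vertices at depth exactly `k`, as subtrees, from left to right. -/
def atDepth : ℕ → PTree 𝒳 → List (PTree 𝒳)
  | 0, t => [t]
  | (k+1), node _ ts => (ts.attach.map (fun s => atDepth k s.1)).flatten

/-- Truncation of a tree at height `k` (keeping the generations `0,…,k`). -/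
def trunc : ℕ → PTree 𝒳 → PTree 𝒳
  | 0, node a _ => node a []
  | (k+1), node a ts => node a (ts.attach.map (fun s => trunc k s.1))

/-- The height of a tree (largest `k` such that generation `k` is nonempty). -/
def height : PTree 𝒳 → ℕ
  | node _ [] => 0
  | node _ (t :: ts) => ((t :: ts).attach.map (fun s => height s.1)).foldr max 0 + 1
decreasing_by
  have := List.sizeOf_lt_of_mem s.2
  simp only [PTree.node.sizeOf_spec] at *
  omega

/-- The largest offspring number in the tree. -/
def maxDeg : PTree 𝒳 → ℕ
  | node _ ts => max ts.length (((ts.attach.map (fun s => maxDeg s.1)).foldr max 0))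
decreasing_by
  have := List.sizeOf_lt_of_mem s.2
  simp only [PTree.node.sizeOf_spec] at *
  omega

end PTree
noncomputable instance {𝒳 : Type*} : DecidableEq (PTree 𝒳) := Classical.decEq _

/-- Extended-real logarithm of an extended nonnegative real. -/
noncomputable def elog (x : ℝ≥0∞) : EReal :=
  if x = 0 then ⊥ else if x = ∞ then ⊤ else ((Real.log x.toReal : ℝ) : EReal)

open Classical in
/-- Relative entropy `H(ν ‖ ρ)` of two (probability) vectors on a countable set,
with value `∞` if `ν` is not absolutely continuous with respect to `ρ`.  (For
probability vectors each summand below is nonnegative and the sum equals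
`∑ ν a log (ν a / ρ a)`.) -/
noncomputable def relEnt {α : Type*} (ν ρ : α → ℝ) : ℝ≥0∞ :=
  if ∀ a, ρ a = 0 → ν a = 0 then
    ∑' a, ENNReal.ofReal (ν a * Real.log (ν a / ρ a) + ρ a - ν a)
  else ∞

/-- The Cramér rate function `I_p(x) = sup_λ {λx - log ∑ p(n) e^{λn}}`. -/
noncomputable def cramerRate (p : ℕ → ℝ) (x : ℝ) : EReal :=
  ⨆ lam : ℝ, ((lam * x - Real.log (∑' n : ℕ, p n * Real.exp (lam * n)) : ℝ) : EReal)

/-- Total mass `P{|T| = n}` assigned by the weight `w` to trees with `n` vertices. -/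
noncomputable def treeMass {𝒳 : Type*} (w : PTree 𝒳 → ℝ) (n : ℕ) : ℝ≥0∞ :=
  ∑' t : PTree 𝒳, if t.size = n then ENNReal.ofReal (w t) else 0

open Classical in
/-- Conditional probability of the event `E` given `{|T| = n}`, for the (sub)probability
weight `w` on finite planar trees.  -/
noncomputable def condP {𝒳 : Type*} (w : PTree 𝒳 → ℝ) (n : ℕ) (E : Set (PTree 𝒳)) : ℝ≥0∞ :=
  (∑' t : PTree 𝒳, if t.size = n ∧ t ∈ E then ENNReal.ofReal (w t) else 0) / treeMass w n

/-- The set of sizes having positive probability. -/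
noncomputable def sizeSupport {𝒳 : Type*} (w : PTree 𝒳 → ℝ) : Set ℕ := {n | 0 < treeMass w n}
section Statement7

variable {R : Type*} [Fintype R] [DecidableEq R]

open Classical in
/-- One step of the sequential active-vertex construction: choose an active vertex
uniformly, provide it offspring (recurrent offspring list together with the number of
omitted transient vertices) according to the kernel `Qr`, add `G(v) + 1` to the size,
deactivate it and activate its offspring. -/
noncomputable def activeStep (Qr : R → List R × ℕ → ℝ≥0∞) :
    Multiset R × ℕ → Multiset R × ℕ → ℝ≥0∞ := fun s s' =>
  ∑ v ∈ s.1.toFinset, ((s.1.count v : ℝ≥0∞) / (Multiset.card s.1 : ℝ≥0∞)) *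
    ∑' cg : List R × ℕ,
      if s'.1 = s.1.erase v + (cg.1 : Multiset R) ∧ s'.2 = s.2 + cg.2 + 1
        then Qr v cg else 0

open Classical in
/-- The distribution of the active-vertex chain after `t` steps, started from a single
active vertex of type `a` at size `0`. -/
noncomputable def activeDist (Qr : R → List R × ℕ → ℝ≥0∞) (a : R) :
    ℕ → Multiset R × ℕ → ℝ≥0∞
  | 0 => fun s => if s = ({a}, 0) then 1 else 0
  | (t+1) => fun s' => ∑' s : Multiset R × ℕ, activeDist Qr a t s * activeStep Qr s s'

/-- `p_{a,b}(n)`: the probability that when the size equals `n` there is exactly one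
active vertex, of type `b` (the state `({b}, n)` is visited at most once, since the
size strictly increases at every step). -/
noncomputable def pActive (Qr : R → List R × ℕ → ℝ≥0∞) (a b : R) (n : ℕ) : ℝ≥0∞ :=
  ∑' t : ℕ, activeDist Qr a t ({b}, n)


section AuxSuper
variable {R : Type*} [Fintype R] [DecidableEq R]

open Classical in
/-- The `t`-step transition kernel of the active-vertex chain. -/
noncomputable def iterK (Qr : R → List R × ℕ → ℝ≥0∞) :
    ℕ → Multiset R × ℕ → Multiset R × ℕ → ℝ≥0∞
  | 0 => fun s s' => if s' = s then 1 else 0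
  | (t+1) => fun s s' => ∑' m : Multiset R × ℕ, iterK Qr t s m * activeStep Qr m s'

lemma activeDist_eq_iterK (Qr : R → List R × ℕ → ℝ≥0∞) (a : R) (t : ℕ) :
    activeDist Qr a t = iterK Qr t ({a}, 0) := by
  induction t with
  | zero => funext s; simp [activeDist, iterK]
  | succ t ih => funext s'; simp [activeDist, iterK, ih]

lemma activeStep_snd_lt {Qr : R → List R × ℕ → ℝ≥0∞} {s s' : Multiset R × ℕ}
    (h : activeStep Qr s s' ≠ 0) : s.2 < s'.2 := by
  classical
  obtain ⟨v, -, hv⟩ := Finset.exists_ne_zero_of_sum_ne_zero h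
  rcases mul_ne_zero_iff.mp hv with ⟨-, h2⟩
  rw [Ne, ENNReal.tsum_eq_zero] at h2
  push_neg at h2
  obtain ⟨cg, hcg⟩ := h2
  split_ifs at hcg with hc
  · omega
  · exact absurd rfl hcg

lemma iterK_snd_le {Qr : R → List R × ℕ → ℝ≥0∞} :
    ∀ {t : ℕ} {s s' : Multiset R × ℕ}, iterK Qr t s s' ≠ 0 → s.2 + t ≤ s'.2 := by
  intro t
  induction t with
  | zero =>
    intro s s' h
    simp only [iterK] at h
    split_ifs at h with hc
    · subst hc; omega
    · exact absurd rfl h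
  | succ t ih =>
    intro s s' h
    simp only [iterK] at h
    rw [Ne, ENNReal.tsum_eq_zero] at h
    push_neg at h
    obtain ⟨m, hm⟩ := h
    rcases mul_ne_zero_iff.mp hm with ⟨h1, h2⟩
    have := ih h1
    have := activeStep_snd_lt h2
    omega

lemma iterK_self_eq_zero (Qr : R → List R × ℕ → ℝ≥0∞) (y₀ : Multiset R × ℕ)
    {s : ℕ} (hs : 0 < s) : iterK Qr s y₀ y₀ = 0 := by
  by_contra h
  have := iterK_snd_le h
  omega

lemma activeStep_shift (Qr : R → List R × ℕ → ℝ≥0∞) (m m' : Multiset R) (k k' d : ℕ) :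
    activeStep Qr (m, k + d) (m', k' + d) = activeStep Qr (m, k) (m', k') := by
  classical
  unfold activeStep
  refine Finset.sum_congr rfl fun v _ => ?_
  congr 1
  refine tsum_congr fun cg => ?_
  refine if_congr (and_congr Iff.rfl ?_) rfl rfl
  constructor <;> (intro h; simp only at h ⊢; omega)

lemma iterK_shift (Qr : R → List R × ℕ → ℝ≥0∞) (t : ℕ) :
    ∀ (m m' : Multiset R) (k k' d : ℕ),
      iterK Qr t (m, k + d) (m', k' + d) = iterK Qr t (m, k) (m', k') := by
  induction t with
  | zero =>
    intro m m' k k' d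
    simp only [iterK]
    refine if_congr ?_ rfl rfl
    simp only [Prod.mk.injEq]
    constructor <;> (rintro ⟨h1, h2⟩; exact ⟨h1, by omega⟩)
  | succ t ih =>
    intro m m' k k' d
    show (∑' s : Multiset R × ℕ, iterK Qr t (m, k + d) s * activeStep Qr s (m', k' + d))
      = ∑' s : Multiset R × ℕ, iterK Qr t (m, k) s * activeStep Qr s (m', k')
    set g : Multiset R × ℕ → ℝ≥0∞ :=
      fun s => iterK Qr t (m, k + d) s * activeStep Qr s (m', k' + d) with hg
    have hinj : Function.Injective (fun p : Multiset R × ℕ => ((p.1, p.2 + d) : Multiset R × ℕ)) := by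
      intro p q h
      simp only [Prod.mk.injEq] at h
      exact Prod.ext h.1 (by omega)
    have hsupp : Function.support g ⊆
        Set.range (fun p : Multiset R × ℕ => ((p.1, p.2 + d) : Multiset R × ℕ)) := by
      intro s hs
      have h1 : iterK Qr t (m, k + d) s ≠ 0 := by
        intro h0; apply hs; simp [hg, h0]
      have h2 := iterK_snd_le h1
      refine ⟨(s.1, s.2 - d), ?_⟩
      simp only [Prod.mk.injEq]
      exact Prod.ext rfl (by simp only; omega)
    rw [← hinj.tsum_eq hsupp]
    refine tsum_congr fun p => ?_
    show iterK Qr t (m, k + d) (p.1, p.2 + d) * activeStep Qr (p.1, p.2 + d) (m', k' + d)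
      = iterK Qr t (m, k) p * activeStep Qr p (m', k')
    rw [ih m p.1 k p.2 d, activeStep_shift]

open Classical in
/-- The taboo kernel: transition probabilities avoiding the state `y₀` at all
intermediate and final stopping, started at `x`. -/
noncomputable def tabooK (Qr : R → List R × ℕ → ℝ≥0∞) (x y₀ : Multiset R × ℕ) :
    ℕ → Multiset R × ℕ → ℝ≥0∞
  | 0 => fun z => if z = x then 1 else 0
  | (t+1) => fun z => ∑' m : Multiset R × ℕ,
      (if m = y₀ then 0 else tabooK Qr x y₀ t m) * activeStep Qr m z

open Classical in
lemma iterK_decomp (Qr : R → List R × ℕ → ℝ≥0∞) (x y₀ : Multiset R × ℕ)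
    (hxy : x ≠ y₀) : ∀ (t : ℕ) (z : Multiset R × ℕ),
    iterK Qr t x z = (if z = y₀ then 0 else tabooK Qr x y₀ t z)
      + ∑ r ∈ Finset.range (t+1), tabooK Qr x y₀ r y₀ * iterK Qr (t - r) y₀ z := by
  intro t
  induction t with
  | zero =>
    intro z
    simp only [iterK, tabooK, zero_add, Finset.sum_range_one, Nat.sub_zero]
    rw [if_neg (fun h : y₀ = x => hxy h.symm), zero_mul, add_zero]
    by_cases hz : z = y₀
    · rw [if_pos hz, if_neg (fun h : z = x => hxy (h ▸ hz))]
    · rw [if_neg hz]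
  | succ t ih =>
    intro z
    have step1 : iterK Qr (t+1) x z
        = ∑' m : Multiset R × ℕ, iterK Qr t x m * activeStep Qr m z := rfl
    rw [step1]
    have hmain : (∑' m : Multiset R × ℕ, iterK Qr t x m * activeStep Qr m z)
        = tabooK Qr x y₀ (t+1) z
          + ∑ r ∈ Finset.range (t+1), tabooK Qr x y₀ r y₀ * iterK Qr (t+1-r) y₀ z := by
      calc ∑' m : Multiset R × ℕ, iterK Qr t x m * activeStep Qr m z
          = ∑' m : Multiset R × ℕ,
              ((if m = y₀ then 0 else tabooK Qr x y₀ t m)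
                + ∑ r ∈ Finset.range (t+1), tabooK Qr x y₀ r y₀ * iterK Qr (t - r) y₀ m)
              * activeStep Qr m z := tsum_congr fun m => by rw [ih m]
        _ = (∑' m : Multiset R × ℕ,
              (if m = y₀ then 0 else tabooK Qr x y₀ t m) * activeStep Qr m z)
            + ∑' m : Multiset R × ℕ,
              (∑ r ∈ Finset.range (t+1), tabooK Qr x y₀ r y₀ * iterK Qr (t - r) y₀ m)
              * activeStep Qr m z := by
            simp_rw [add_mul]; exact ENNReal.tsum_add
        _ = tabooK Qr x y₀ (t+1) z
            + ∑ r ∈ Finset.range (t+1), tabooK Qr x y₀ r y₀ * iterK Qr (t+1-r) y₀ z := by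
            congr 1
            calc ∑' m : Multiset R × ℕ,
                  (∑ r ∈ Finset.range (t+1), tabooK Qr x y₀ r y₀ * iterK Qr (t - r) y₀ m)
                  * activeStep Qr m z
                = ∑' m : Multiset R × ℕ, ∑ r ∈ Finset.range (t+1),
                    tabooK Qr x y₀ r y₀ * (iterK Qr (t - r) y₀ m * activeStep Qr m z) := by
                  refine tsum_congr fun m => ?_
                  rw [Finset.sum_mul]
                  exact Finset.sum_congr rfl fun r _ => mul_assoc _ _ _
              _ = ∑ r ∈ Finset.range (t+1), ∑' m : Multiset R × ℕ,
                    tabooK Qr x y₀ r y₀ * (iterK Qr (t - r) y₀ m * activeStep Qr m z) :=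
                  Summable.tsum_finsetSum fun r _ => ENNReal.summable
              _ = ∑ r ∈ Finset.range (t+1),
                    tabooK Qr x y₀ r y₀ * iterK Qr (t - r + 1) y₀ z := by
                  refine Finset.sum_congr rfl fun r _ => ?_
                  rw [ENNReal.tsum_mul_left]
                  rfl
              _ = ∑ r ∈ Finset.range (t+1),
                    tabooK Qr x y₀ r y₀ * iterK Qr (t+1-r) y₀ z := by
                  refine Finset.sum_congr rfl fun r hr => ?_
                  have := Finset.mem_range.mp hr
                  congr 2
                  omega
    rw [hmain]
    conv_rhs => rw [Finset.sum_range_succ]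
    have hz0 : iterK Qr (t + 1 - (t + 1)) y₀ z = iterK Qr 0 y₀ z := by rw [Nat.sub_self]
    rw [hz0]
    by_cases hz : z = y₀
    · subst hz
      simp [iterK]
      exact add_comm _ _
    · simp [iterK, hz]

open Classical in
lemma tabooK_eq_iterK (Qr : R → List R × ℕ → ℝ≥0∞) (x y₀ : Multiset R × ℕ)
    (hxy : x ≠ y₀) (t : ℕ) : tabooK Qr x y₀ t y₀ = iterK Qr t x y₀ := by
  have h := iterK_decomp Qr x y₀ hxy t y₀
  rw [if_pos rfl, zero_add] at h
  rw [h]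
  rw [Finset.sum_eq_single t]
  · rw [Nat.sub_self]
    simp [iterK]
  · intro r hr hne
    have hrt : r < t + 1 := Finset.mem_range.mp hr
    rw [iterK_self_eq_zero Qr y₀ (by omega), mul_zero]
  · intro h'
    exact absurd (Finset.self_mem_range_succ t) h'

end AuxSuper

theorem active_vertex_supermultiplicativity
    (Qr : R → List R × ℕ → ℝ≥0∞) (hprob : ∀ v, ∑' cg : List R × ℕ, Qr v cg = 1)
    (N₁ : ℕ) (hbdd : ∀ (v : R) (cg : List R × ℕ), N₁ < cg.2 → Qr v cg = 0) :
    ∀ (a₁ a₂ a₃ : R) (n₁ n₂ : ℕ), 0 < n₁ → 0 < n₂ →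
      pActive Qr a₁ a₂ n₁ * pActive Qr a₂ a₃ n₂ ≤ pActive Qr a₁ a₃ (n₁ + n₂) := by
  intro a₁ a₂ a₃ n₁ n₂ hn₁ hn₂
  classical
  set x : Multiset R × ℕ := ({a₁}, 0) with hx
  set y₀ : Multiset R × ℕ := ({a₂}, n₁) with hy
  set z : Multiset R × ℕ := ({a₃}, n₁ + n₂) with hz
  have hxy : x ≠ y₀ := by
    intro h
    have := congrArg Prod.snd h
    simp only [hx, hy] at this
    omega
  set A : ℕ → ℝ≥0∞ := fun r => iterK Qr r x y₀ with hA
  set B : ℕ → ℝ≥0∞ := fun s => iterK Qr s y₀ z with hB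
  have ha : pActive Qr a₁ a₂ n₁ = ∑' r, A r :=
    tsum_congr fun t => by rw [activeDist_eq_iterK]
  have hb : pActive Qr a₂ a₃ n₂ = ∑' s, B s := by
    refine tsum_congr fun s => ?_
    rw [activeDist_eq_iterK]
    have h := iterK_shift Qr s {a₂} {a₃} 0 n₂ n₁
    rw [Nat.zero_add, Nat.add_comm n₂ n₁] at h
    exact h.symm
  have hc : pActive Qr a₁ a₃ (n₁ + n₂) = ∑' t, iterK Qr t x z :=
    tsum_congr fun t => by rw [activeDist_eq_iterK]
  rw [ha, hb, hc]
  have key : ∀ t, ∑ r ∈ Finset.range (t+1), A r * B (t - r) ≤ iterK Qr t x z := by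
    intro t
    rw [iterK_decomp Qr x y₀ hxy t z]
    have heq : ∑ r ∈ Finset.range (t+1), A r * B (t - r)
        = ∑ r ∈ Finset.range (t+1), tabooK Qr x y₀ r y₀ * iterK Qr (t - r) y₀ z := by
      refine Finset.sum_congr rfl fun r _ => ?_
      rw [hA, tabooK_eq_iterK Qr x y₀ hxy r]
    rw [heq]
    exact le_add_self
  have h1 : (∑' r, A r) * (∑' s, B s) = ∑' p : ℕ × ℕ, A p.1 * B p.2 := by
    rw [ENNReal.tsum_prod']
    simp_rw [ENNReal.tsum_mul_left]
    rw [ENNReal.tsum_mul_right]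
  have h2 : (∑' p : ℕ × ℕ, A p.1 * B p.2)
      ≤ ∑' t, ∑ r ∈ Finset.range (t+1), A r * B (t - r) := by
    have hinj : Function.Injective (fun p : ℕ × ℕ => ((p.1 + p.2, p.1) : ℕ × ℕ)) := by
      intro p q h
      simp only [Prod.mk.injEq] at h
      exact Prod.ext h.2 (by omega)
    calc ∑' p : ℕ × ℕ, A p.1 * B p.2
        = ∑' p : ℕ × ℕ, (fun q : ℕ × ℕ => if q.2 ≤ q.1 then A q.2 * B (q.1 - q.2) else 0)
            ((p.1 + p.2, p.1)) := by
          refine tsum_congr fun p => ?_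
          simp
      _ ≤ ∑' q : ℕ × ℕ, (if q.2 ≤ q.1 then A q.2 * B (q.1 - q.2) else 0) :=
          ENNReal.tsum_comp_le_tsum_of_injective hinj _
      _ = ∑' t, ∑ r ∈ Finset.range (t+1), A r * B (t - r) := by
          rw [ENNReal.tsum_prod']
          refine tsum_congr fun u => ?_
          rw [tsum_eq_sum (s := Finset.range (u+1))
            (fun r hr => if_neg (by simp only [Finset.mem_range] at hr; omega))]
          exact Finset.sum_congr rfl fun r hr =>
            if_pos (by simpa [Nat.lt_succ_iff] using Finset.mem_range.mp hr)
  calc (∑' r, A r) * (∑' s, B s) = ∑' p : ℕ × ℕ, A p.1 * B p.2 := h1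
    _ ≤ ∑' t, ∑ r ∈ Finset.range (t+1), A r * B (t - r) := h2
    _ ≤ ∑' t, iterK Qr t x z := ENNReal.tsum_le_tsum key


end Statement7
end

section
/- The function J on ℳ(𝒳 × 𝒳*), defined by J(ν) = H(ν ∥ ν₁ ⊗ 𝒬) if ν is shift-invariant and J(ν) = ∞ otherwise, is convex and lower semicontinuous; moreover J(ν) ≤ Ĵ(ν) for every ν ∈ ℳ(𝒳 × 𝒳*), where Ĵ(ν) = sup over bounded g : 𝒳 × 𝒳* → ℝ of ∫ [g(b,c) − ∑_{j=1}^{n} U_g(a_j)] ν(db, dc), with c = (n, a₁,…,a_n) and U_g(a) = log ∑_c 𝒬{c|a} e^{g(a,c)}. -/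
open scoped ENNReal NNReal BigOperators
open Filter

section Multitype

variable {𝒳 : Type*} [Fintype 𝒳] [DecidableEq 𝒳]

/-- The weight of a typed tree under the multitype Galton-Watson law with initial
distribution `μ0` and offspring kernel `𝒬` (an offspring `c ∈ 𝒳*` is recorded as the
list of types of the children from left to right):
`μ0(root) ∏_v 𝒬{C(v) | type v}`. -/
noncomputable def mgwWeight (μ0 : 𝒳 → ℝ) (𝒬 : 𝒳 → List 𝒳 → ℝ) (t : PTree 𝒳) : ℝ :=
  μ0 t.root * (t.subtrees.map (fun s => 𝒬 s.root s.childLabels)).prod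

/-- The multiplicity `m(a,c)` of the symbol `a` in `c ∈ 𝒳*`. -/
def mult (a : 𝒳) (c : List 𝒳) : ℕ := c.count a

/-- The empirical offspring measure `M_X` of a typed tree. -/
noncomputable def empOff (t : PTree 𝒳) : 𝒳 × List 𝒳 → ℝ := fun x =>
  ((t.subtrees.filter (fun s => s.root = x.1 ∧ s.childLabels = x.2)).length : ℝ) / t.size

/-- The `𝒳`-marginal `ν₁` of a measure on `𝒳 × 𝒳*`. -/
noncomputable def marg1 (ν : 𝒳 × List 𝒳 → ℝ) (a : 𝒳) : ℝ := ∑' c : List 𝒳, ν (a, c)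

/-- Shift-invariance: `ν₁(a) = ∑_{(b,c)} m(a,c) ν(b,c)` for all `a`. -/
def ShiftInv (ν : 𝒳 × List 𝒳 → ℝ) : Prop :=
  ∀ a : 𝒳, marg1 ν a = ∑' x : 𝒳 × List 𝒳, (mult a x.2 : ℝ) * ν x

/-- Membership in `ℳ(𝒳 × 𝒳*)`: a probability measure with finite mean offspring
number. -/
structure IsOffMeasure (ν : 𝒳 × List 𝒳 → ℝ) : Prop where
  nonneg : ∀ x, 0 ≤ ν x
  hasSum : HasSum ν 1
  moment : Summable (fun x : 𝒳 × List 𝒳 => (x.2.length : ℝ) * ν x)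

/-- The space `ℳ(𝒳 × 𝒳*)`. -/
def MSpace (𝒳 : Type*) [Fintype 𝒳] [DecidableEq 𝒳] :=
  {ν : 𝒳 × List 𝒳 → ℝ // IsOffMeasure ν}

/-- The test functions defining the topology of `ℳ(𝒳 × 𝒳*)`: all bounded functions
together with the functions `(b,c) ↦ m(a,c) 𝟙_{b₀}(b)`, `a, b₀ ∈ 𝒳`. -/
def offTests (𝒳 : Type*) [Fintype 𝒳] [DecidableEq 𝒳] : Set ((𝒳 × List 𝒳) → ℝ) :=
  {f | ∃ M : ℝ, ∀ x, |f x| ≤ M} ∪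
    {f | ∃ a b₀ : 𝒳, f = fun x => (mult a x.2 : ℝ) * (if x.1 = b₀ then 1 else 0)}

/-- The topology of `ℳ(𝒳 × 𝒳*)`: the smallest topology making `ν ↦ ∫ f dν`
continuous for every test function `f`. -/
noncomputable instance : TopologicalSpace (MSpace 𝒳) :=
  TopologicalSpace.induced
    (fun ν : MSpace 𝒳 => fun f : offTests 𝒳 => ∑' x, ν.1 x * f.1 x) Pi.topologicalSpace

open Classical in
/-- The rate function `J(ν) = H(ν ‖ ν₁ ⊗ 𝒬)` for shift-invariant `ν`, `∞` otherwise. -/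
noncomputable def offRate (𝒬 : 𝒳 → List 𝒳 → ℝ) (ν : 𝒳 × List 𝒳 → ℝ) : ℝ≥0∞ :=
  if ShiftInv ν then relEnt ν (fun x => marg1 ν x.1 * 𝒬 x.1 x.2) else ∞

/-- The expected offspring matrix `A(a,b) = ∑_c 𝒬{c | b} m(a,c)` (with values in
`[0,∞]`). -/
noncomputable def meanMat (𝒬 : 𝒳 → List 𝒳 → ℝ) : Matrix 𝒳 𝒳 ℝ≥0∞ :=
  Matrix.of fun a b => ∑' c : List 𝒳, ENNReal.ofReal (𝒬 b c) * (mult a c : ℝ≥0∞)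

/-- `A* = ∑_{k ≥ 1} A^k`. -/
noncomputable def matStar (A : Matrix 𝒳 𝒳 ℝ≥0∞) : Matrix 𝒳 𝒳 ℝ≥0∞ :=
  Matrix.of fun a b => ∑' k : ℕ, (A ^ (k + 1)) a b

/-- Weak irreducibility of a nonnegative matrix with respect to a partition of `𝒳`
into recurrent states `Xr` and transient states `Xt`. -/
structure WeaklyIrred (A : Matrix 𝒳 𝒳 ℝ≥0∞) (Xr Xt : Finset 𝒳) : Prop where
  compl : ∀ a, a ∈ Xr ↔ a ∉ Xt
  npty : Xr.Nonempty
  rec_pos : ∀ a b, b ∈ Xr → 0 < matStar A a b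
  trans_zero : ∀ a b, b ∈ Xt → a = b ∨ a ∈ Xr → matStar A a b = 0

/-- The real expected offspring matrix. -/
noncomputable def meanMatR (𝒬 : 𝒳 → List 𝒳 → ℝ) : Matrix 𝒳 𝒳 ℝ :=
  Matrix.of fun a b => ∑' c : List 𝒳, 𝒬 b c * (mult a c : ℝ)

/-- Criticality: the Perron-Frobenius eigenvalue of the expected offspring matrix is
`1`; equivalently (for weakly irreducible matrices) there is a strictly positive right
eigenvector with eigenvalue `1`. -/
def CriticalKernel (𝒬 : 𝒳 → List 𝒳 → ℝ) : Prop :=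
  ∃ u : 𝒳 → ℝ, (∀ a, 0 < u a) ∧ ∀ a, ∑ b, meanMatR 𝒬 a b * u b = u a

/-- The uniform bound on the number of transient offspring. -/
def BoundedTransient (𝒬 : 𝒳 → List 𝒳 → ℝ) (Xt : Finset 𝒳) : Prop :=
  ∃ B : ℕ, ∀ b c, 𝒬 b c ≠ 0 → c.countP (fun a => decide (a ∈ Xt)) ≤ B

end Multitype
section Variational

variable {𝒳 : Type*} [Fintype 𝒳] [DecidableEq 𝒳]

/-- `U_g(a) = log ∑_c 𝒬{c|a} e^{g(a,c)}`. -/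
noncomputable def Ug (𝒬 : 𝒳 → List 𝒳 → ℝ) (g : 𝒳 × List 𝒳 → ℝ) (a : 𝒳) : ℝ :=
  Real.log (∑' c : List 𝒳, 𝒬 a c * Real.exp (g (a, c)))

/-- The variational functional
`Ĵ(ν) = sup_{g bounded} ∫ [g(b,c) − ∑_{j=1}^n U_g(a_j)] ν(db,dc)`,
where `c = (n, a₁, …, a_n)`. -/
noncomputable def offRateVar (𝒬 : 𝒳 → List 𝒳 → ℝ) (ν : 𝒳 × List 𝒳 → ℝ) : EReal :=
  ⨆ g : {g : 𝒳 × List 𝒳 → ℝ // ∃ M : ℝ, ∀ x, |g x| ≤ M},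
    ((∑' x : 𝒳 × List 𝒳, ν x * (g.1 x - (x.2.map (Ug 𝒬 g.1)).sum) : ℝ) : EReal)

end Variational
set_option linter.unusedSectionVars false

section AuxTools

variable {𝒳 : Type*} [Fintype 𝒳] [DecidableEq 𝒳]

lemma list_map_sum_count (u : 𝒳 → ℝ) (l : List 𝒳) :
    (l.map u).sum = ∑ a : 𝒳, (l.count a : ℝ) * u a := by
  induction l with
  | nil => simp
  | cons b l ih =>
      have step : ∀ x : 𝒳, (((b :: l).count x : ℕ) : ℝ) * u x
          = (l.count x : ℝ) * u x + (if x = b then u x else 0) := by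
        intro x
        rw [List.count_cons]
        push_cast [beq_iff_eq]
        by_cases h : x = b
        · subst h; simp [add_mul]
        · have h' : ¬ b = x := fun hh => h hh.symm
          simp [h, h']
      simp only [List.map_cons, List.sum_cons, ih]
      rw [Finset.sum_congr rfl (fun x _ => step x), Finset.sum_add_distrib,
        Finset.sum_ite_eq' Finset.univ b u]
      simp [add_comm]

namespace IsOffMeasure

variable {ν : 𝒳 × List 𝒳 → ℝ} (hν : IsOffMeasure ν)

include hν

lemma summable : Summable ν := hν.hasSum.summable

lemma summable_mul_bounded {w : 𝒳 × List 𝒳 → ℝ} {M : ℝ} (hw : ∀ x, |w x| ≤ M) :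
    Summable (fun x => ν x * w x) := by
  refine Summable.of_abs (Summable.of_nonneg_of_le (fun x => abs_nonneg _)
    (fun x => ?_) (hν.summable.mul_right M))
  rw [abs_mul, abs_of_nonneg (hν.nonneg x)]
  exact mul_le_mul_of_nonneg_left (hw x) (hν.nonneg x)

lemma summable_count_mul (a : 𝒳) : Summable (fun x : 𝒳 × List 𝒳 => (x.2.count a : ℝ) * ν x) := by
  refine Summable.of_nonneg_of_le (fun x => mul_nonneg (by positivity) (hν.nonneg x))
    (fun x => ?_) hν.moment
  exact mul_le_mul_of_nonneg_right (by exact_mod_cast List.count_le_length (a := a) (l := x.2)) (hν.nonneg x)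

lemma summable_fiber (b : 𝒳) : Summable (fun c => ν (b, c)) := hν.summable.prod_factor b

lemma marg1_nonneg (b : 𝒳) : 0 ≤ marg1 ν b := tsum_nonneg (fun c => hν.nonneg _)

lemma le_marg1 (x : 𝒳 × List 𝒳) : ν x ≤ marg1 ν x.1 :=
  Summable.le_tsum (hν.summable_fiber x.1) x.2 (fun c _ => hν.nonneg _)

lemma hasSum_marg1 : HasSum (marg1 ν) 1 :=
  hν.hasSum.prod_fiberwise (fun b => (hν.summable_fiber b).hasSum)

lemma sum_marg1 : ∑ b : 𝒳, marg1 ν b = 1 := by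
  have := hν.hasSum_marg1.tsum_eq
  rwa [tsum_fintype] at this

lemma tsum_prod_eq {f : 𝒳 × List 𝒳 → ℝ} (hf : Summable f) :
    ∑' x : 𝒳 × List 𝒳, f x = ∑ b : 𝒳, ∑' c : List 𝒳, f (b, c) := by
  rw [Summable.tsum_prod' hf (fun b => hf.prod_factor b), tsum_fintype]

end IsOffMeasure

section UgBounds

variable (𝒬 : 𝒳 → List 𝒳 → ℝ) (h𝒬_nonneg : ∀ a c, 0 ≤ 𝒬 a c) (h𝒬_sum : ∀ a, HasSum (𝒬 a) 1)
variable {g : 𝒳 × List 𝒳 → ℝ} {M : ℝ} (hg : ∀ x, |g x| ≤ M)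

include h𝒬_nonneg h𝒬_sum hg

lemma summable_Q_exp (a : 𝒳) : Summable (fun c => 𝒬 a c * Real.exp (g (a, c))) := by
  refine Summable.of_nonneg_of_le
    (fun c => mul_nonneg (h𝒬_nonneg a c) (Real.exp_pos _).le) (fun c => ?_)
    ((h𝒬_sum a).summable.mul_right (Real.exp M))
  exact mul_le_mul_of_nonneg_left
    (Real.exp_le_exp.mpr ((abs_le.mp (hg (a, c))).2)) (h𝒬_nonneg a c)

lemma Q_exp_lower (a : 𝒳) :
    Real.exp (-M) ≤ ∑' c, 𝒬 a c * Real.exp (g (a, c)) := by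
  have h1 : ∑' c, 𝒬 a c * Real.exp (-M) ≤ ∑' c, 𝒬 a c * Real.exp (g (a, c)) := by
    refine Summable.tsum_le_tsum (fun c => ?_) ((h𝒬_sum a).summable.mul_right _)
      (summable_Q_exp 𝒬 h𝒬_nonneg h𝒬_sum hg a)
    exact mul_le_mul_of_nonneg_left
      (Real.exp_le_exp.mpr (neg_le_of_abs_le (hg (a, c)))) (h𝒬_nonneg a c)
  rwa [tsum_mul_right, (h𝒬_sum a).tsum_eq, one_mul] at h1

lemma Q_exp_upper (a : 𝒳) :
    ∑' c, 𝒬 a c * Real.exp (g (a, c)) ≤ Real.exp M := by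
  have h1 : ∑' c, 𝒬 a c * Real.exp (g (a, c)) ≤ ∑' c, 𝒬 a c * Real.exp M := by
    refine Summable.tsum_le_tsum (fun c => ?_) (summable_Q_exp 𝒬 h𝒬_nonneg h𝒬_sum hg a)
      ((h𝒬_sum a).summable.mul_right _)
    exact mul_le_mul_of_nonneg_left
      (Real.exp_le_exp.mpr ((abs_le.mp (hg (a, c))).2)) (h𝒬_nonneg a c)
  rwa [tsum_mul_right, (h𝒬_sum a).tsum_eq, one_mul] at h1

lemma Q_exp_pos (a : 𝒳) : 0 < ∑' c, 𝒬 a c * Real.exp (g (a, c)) :=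
  lt_of_lt_of_le (Real.exp_pos _) (Q_exp_lower 𝒬 h𝒬_nonneg h𝒬_sum hg a)

lemma abs_Ug_le (a : 𝒳) : |Ug 𝒬 g a| ≤ M := by
  rw [Ug, abs_le]
  constructor
  · calc -M = Real.log (Real.exp (-M)) := (Real.log_exp _).symm
      _ ≤ _ := Real.log_le_log (Real.exp_pos _) (Q_exp_lower 𝒬 h𝒬_nonneg h𝒬_sum hg a)
  · calc Real.log _ ≤ Real.log (Real.exp M) :=
        Real.log_le_log (Q_exp_pos 𝒬 h𝒬_nonneg h𝒬_sum hg a) (Q_exp_upper 𝒬 h𝒬_nonneg h𝒬_sum hg a)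
      _ = M := Real.log_exp _

end UgBounds

section Tlemma

variable (𝒬 : 𝒳 → List 𝒳 → ℝ)
variable {ν : 𝒳 × List 𝒳 → ℝ} (hν : IsOffMeasure ν)
variable {g : 𝒳 × List 𝒳 → ℝ} {M : ℝ} (hg : ∀ x, |g x| ≤ M)

include hν hg

lemma T_pointwise (x : 𝒳 × List 𝒳) :
    ν x * (g x - (x.2.map (Ug 𝒬 g)).sum)
      = ν x * g x - ∑ a : 𝒳, Ug 𝒬 g a * ((x.2.count a : ℝ) * ν x) := by
  rw [list_map_sum_count, mul_sub, Finset.mul_sum]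
  congr 1
  exact Finset.sum_congr rfl (fun a _ => by ring)

lemma T_eq :
    ∑' x : 𝒳 × List 𝒳, ν x * (g x - (x.2.map (Ug 𝒬 g)).sum)
      = (∑' x : 𝒳 × List 𝒳, ν x * g x)
        - ∑ a : 𝒳, Ug 𝒬 g a * ∑' x : 𝒳 × List 𝒳, (x.2.count a : ℝ) * ν x := by
  have s1 : Summable (fun x : 𝒳 × List 𝒳 => ν x * g x) := hν.summable_mul_bounded hg
  have s2 : ∀ a : 𝒳, Summable (fun x : 𝒳 × List 𝒳 => Ug 𝒬 g a * ((x.2.count a : ℝ) * ν x)) :=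
    fun a => (hν.summable_count_mul a).mul_left _
  calc ∑' x : 𝒳 × List 𝒳, ν x * (g x - (x.2.map (Ug 𝒬 g)).sum)
      = ∑' x : 𝒳 × List 𝒳, (ν x * g x - ∑ a : 𝒳, Ug 𝒬 g a * ((x.2.count a : ℝ) * ν x)) :=
        tsum_congr (fun x => T_pointwise 𝒬 hν hg x)
    _ = (∑' x : 𝒳 × List 𝒳, ν x * g x)
        - ∑' x : 𝒳 × List 𝒳, ∑ a : 𝒳, Ug 𝒬 g a * ((x.2.count a : ℝ) * ν x) :=
        Summable.tsum_sub s1 (summable_sum (fun a _ => s2 a))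
    _ = _ := by
        rw [Summable.tsum_finsetSum (fun a _ => s2 a)]
        congr 1
        exact Finset.sum_congr rfl (fun a _ => tsum_mul_left)

lemma T_summable :
    Summable (fun x : 𝒳 × List 𝒳 => ν x * (g x - (x.2.map (Ug 𝒬 g)).sum)) := by
  have s1 : Summable (fun x : 𝒳 × List 𝒳 => ν x * g x) := hν.summable_mul_bounded hg
  have s2 : ∀ a : 𝒳, Summable (fun x : 𝒳 × List 𝒳 => Ug 𝒬 g a * ((x.2.count a : ℝ) * ν x)) :=
    fun a => (hν.summable_count_mul a).mul_left _
  have : Summable (fun x : 𝒳 × List 𝒳 =>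
      ν x * g x - ∑ a : 𝒳, Ug 𝒬 g a * ((x.2.count a : ℝ) * ν x)) :=
    s1.sub (summable_sum (fun a _ => s2 a))
  exact this.congr (fun x => (T_pointwise 𝒬 hν hg x).symm)

end Tlemma

end AuxTools


section MyG

noncomputable def myG (s t : ℝ) : ℝ≥0∞ :=
  if t = 0 ∧ s ≠ 0 then ⊤ else ENNReal.ofReal (s * Real.log (s/t) + t - s)

lemma relEnt_eq_tsum_myG {α : Type*} (ν ρ : α → ℝ) :
    relEnt ν ρ = ∑' a, myG (ν a) (ρ a) := by
  rw [relEnt]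
  split_ifs with h
  · refine tsum_congr fun a => ?_
    rw [myG, if_neg]
    rintro ⟨h0, h1⟩
    exact h1 (h a h0)
  · push_neg at h
    obtain ⟨a, h0, h1⟩ := h
    symm
    rw [eq_top_iff]
    calc (⊤:ℝ≥0∞) = myG (ν a) (ρ a) := by rw [myG, if_pos ⟨h0, h1⟩]
      _ ≤ _ := ENNReal.le_tsum a

lemma log_sum_ineq {a b a' b' : ℝ} (ha : 0 ≤ a) (hb : 0 ≤ b) (ha' : 0 ≤ a') (hb' : 0 ≤ b')
    (hab : b = 0 → a = 0) (hab' : b' = 0 → a' = 0) :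
    (a + a') * Real.log ((a + a')/(b + b')) ≤ a * Real.log (a/b) + a' * Real.log (a'/b') := by
  rcases eq_or_lt_of_le hb with hb0 | hbpos
  · rw [← hb0, hab hb0.symm]; simp
  rcases eq_or_lt_of_le hb' with hb0' | hbpos'
  · rw [← hb0', hab' hb0'.symm]; simp
  have hbb : 0 < b + b' := by linarith
  have key := Real.convexOn_mul_log.2 (Set.mem_Ici.mpr (div_nonneg ha hbpos.le : (0:ℝ) ≤ a/b))
    (Set.mem_Ici.mpr (div_nonneg ha' hbpos'.le)) (by positivity : (0:ℝ) ≤ b/(b+b'))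
    (by positivity : (0:ℝ) ≤ b'/(b+b')) (by field_simp)
  simp only [smul_eq_mul] at key
  have e1 : b/(b+b') * (a/b) + b'/(b+b') * (a'/b') = (a+a')/(b+b') := by
    field_simp
  rw [e1] at key
  have h2 := mul_le_mul_of_nonneg_left key hbb.le
  calc (a + a') * Real.log ((a + a')/(b + b'))
      = (b+b') * ((a+a')/(b+b') * Real.log ((a+a')/(b+b'))) := by field_simp
    _ ≤ (b+b') * (b/(b+b') * (a/b * Real.log (a/b)) + b'/(b+b') * (a'/b' * Real.log (a'/b'))) := h2
    _ = a * Real.log (a/b) + a' * Real.log (a'/b') := by field_simp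

lemma myG_convex {θ s t s' t' : ℝ} (hθ0 : 0 < θ) (hθ1 : θ < 1) (hs : 0 ≤ s) (ht : 0 ≤ t)
    (hs' : 0 ≤ s') (ht' : 0 ≤ t') :
    myG (θ*s + (1-θ)*s') (θ*t + (1-θ)*t')
      ≤ ENNReal.ofReal θ * myG s t + ENNReal.ofReal (1-θ) * myG s' t' := by
  by_cases h1 : t = 0 ∧ s ≠ 0
  · rw [show myG s t = ⊤ from by rw [myG, if_pos h1],
      ENNReal.mul_top (by simp [ENNReal.ofReal_eq_zero]; linarith)]
    simp
  by_cases h2 : t' = 0 ∧ s' ≠ 0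
  · rw [show myG s' t' = ⊤ from by rw [myG, if_pos h2],
      ENNReal.mul_top (by simp [ENNReal.ofReal_eq_zero]; linarith)]
    simp
  push_neg at h1 h2
  have hmix : ¬ ((θ*t + (1-θ)*t') = 0 ∧ (θ*s + (1-θ)*s') ≠ 0) := by
    rintro ⟨h0, hne⟩
    have ht0 : t = 0 := by nlinarith
    have ht0' : t' = 0 := by nlinarith
    exact hne (by rw [h1 ht0, h2 ht0']; ring)
  have key : (θ*s + (1-θ)*s') * Real.log ((θ*s + (1-θ)*s')/(θ*t + (1-θ)*t'))
      + (θ*t + (1-θ)*t') - (θ*s + (1-θ)*s')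
      ≤ θ * (s * Real.log (s/t) + t - s) + (1-θ) * (s' * Real.log (s'/t') + t' - s') := by
    have l1 := log_sum_ineq (a := θ*s) (b := θ*t) (a' := (1-θ)*s') (b' := (1-θ)*t')
      (mul_nonneg hθ0.le hs) (mul_nonneg hθ0.le ht) (mul_nonneg (by linarith) hs')
      (mul_nonneg (by linarith) ht')
      (fun h => by rw [h1 (by nlinarith)]; ring) (fun h => by rw [h2 (by nlinarith)]; ring)
    have e1 : θ*s/(θ*t) = s/t := mul_div_mul_left s t hθ0.ne'
    have e2 : (1-θ)*s'/((1-θ)*t') = s'/t' := mul_div_mul_left s' t' (by linarith)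
    rw [e1, e2] at l1
    nlinarith [l1]
  rw [myG, myG, myG, if_neg hmix, if_neg (by tauto), if_neg (by tauto)]
  calc ENNReal.ofReal _ ≤ ENNReal.ofReal (θ * (s * Real.log (s/t) + t - s)
        + (1-θ) * (s' * Real.log (s'/t') + t' - s')) := ENNReal.ofReal_le_ofReal key
    _ ≤ _ := by
        refine (ENNReal.ofReal_add_le).trans ?_
        rw [ENNReal.ofReal_mul hθ0.le, ENNReal.ofReal_mul (by linarith : (0:ℝ) ≤ 1-θ)]

end MyG

section ConvexityLemma

variable {𝒳 : Type*} [Fintype 𝒳] [DecidableEq 𝒳]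

lemma marg1_combo {ν ν' : 𝒳 × List 𝒳 → ℝ} (hν : IsOffMeasure ν) (hν' : IsOffMeasure ν')
    (θ : ℝ) (a : 𝒳) :
    marg1 (fun x => θ * ν x + (1 - θ) * ν' x) a = θ * marg1 ν a + (1 - θ) * marg1 ν' a := by
  rw [marg1, marg1, marg1, ← tsum_mul_left, ← tsum_mul_left]
  exact Summable.tsum_add ((hν.summable_fiber a).mul_left θ) ((hν'.summable_fiber a).mul_left (1-θ))

lemma count_tsum_combo {ν ν' : 𝒳 × List 𝒳 → ℝ} (hν : IsOffMeasure ν) (hν' : IsOffMeasure ν')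
    (θ : ℝ) (a : 𝒳) :
    ∑' x : 𝒳 × List 𝒳, (x.2.count a : ℝ) * (θ * ν x + (1 - θ) * ν' x)
      = θ * ∑' x : 𝒳 × List 𝒳, (x.2.count a : ℝ) * ν x
        + (1 - θ) * ∑' x : 𝒳 × List 𝒳, (x.2.count a : ℝ) * ν' x := by
  rw [← tsum_mul_left, ← tsum_mul_left,
    ← Summable.tsum_add (((hν.summable_count_mul a)).mul_left θ)
      (((hν'.summable_count_mul a)).mul_left (1-θ))]
  exact tsum_congr fun x => by ring

lemma shiftInv_combo {ν ν' : 𝒳 × List 𝒳 → ℝ} (hν : IsOffMeasure ν) (hν' : IsOffMeasure ν')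
    (hs : ShiftInv ν) (hs' : ShiftInv ν') (θ : ℝ) :
    ShiftInv (fun x => θ * ν x + (1 - θ) * ν' x) := by
  intro a
  have h1 := hs a
  have h2 := hs' a
  simp only [mult] at h1 h2 ⊢
  rw [marg1_combo hν hν' θ a, count_tsum_combo hν hν' θ a, h1, h2]

lemma offRate_convex (𝒬 : 𝒳 → List 𝒳 → ℝ) (h𝒬_nonneg : ∀ a c, 0 ≤ 𝒬 a c)
    {ν ν' : 𝒳 × List 𝒳 → ℝ} (hν : IsOffMeasure ν) (hν' : IsOffMeasure ν')
    {θ : ℝ} (hθ0 : 0 < θ) (hθ1 : θ < 1) :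
    offRate 𝒬 (fun x => θ * ν x + (1 - θ) * ν' x)
      ≤ ENNReal.ofReal θ * offRate 𝒬 ν + ENNReal.ofReal (1 - θ) * offRate 𝒬 ν' := by
  simp only [offRate]
  by_cases hsν : ShiftInv ν
  swap
  · rw [if_neg hsν, ENNReal.mul_top (by simp [ENNReal.ofReal_eq_zero]; linarith)]
    simp
  by_cases hsν' : ShiftInv ν'
  swap
  · rw [if_neg hsν',
      ENNReal.mul_top (by simp [ENNReal.ofReal_eq_zero]; linarith)]
    simp
  rw [if_pos hsν, if_pos hsν',
    if_pos (shiftInv_combo hν hν' hsν hsν' θ)]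
  rw [relEnt_eq_tsum_myG, relEnt_eq_tsum_myG, relEnt_eq_tsum_myG]
  calc ∑' x : 𝒳 × List 𝒳, myG (θ * ν x + (1-θ) * ν' x)
            (marg1 (fun x => θ * ν x + (1 - θ) * ν' x) x.1 * 𝒬 x.1 x.2)
      ≤ ∑' x : 𝒳 × List 𝒳, (ENNReal.ofReal θ * myG (ν x) (marg1 ν x.1 * 𝒬 x.1 x.2)
          + ENNReal.ofReal (1-θ) * myG (ν' x) (marg1 ν' x.1 * 𝒬 x.1 x.2)) := by
        refine ENNReal.tsum_le_tsum fun x => ?_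
        have e : marg1 (fun x => θ * ν x + (1 - θ) * ν' x) x.1 * 𝒬 x.1 x.2
            = θ * (marg1 ν x.1 * 𝒬 x.1 x.2) + (1-θ) * (marg1 ν' x.1 * 𝒬 x.1 x.2) := by
          rw [marg1_combo hν hν' θ x.1]; ring
        rw [e]
        exact myG_convex hθ0 hθ1 (hν.nonneg x)
          (mul_nonneg (hν.marg1_nonneg x.1) (h𝒬_nonneg x.1 x.2)) (hν'.nonneg x)
          (mul_nonneg (hν'.marg1_nonneg x.1) (h𝒬_nonneg x.1 x.2))
    _ = _ := by
        rw [ENNReal.tsum_add, ENNReal.tsum_mul_left, ENNReal.tsum_mul_left]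

end ConvexityLemma


section LSCsec

open Topology Classical

lemma myG_lsc_at {s t : ℝ} (hs : 0 ≤ s) (ht : 0 ≤ t) :
    LowerSemicontinuousAt (fun p : ℝ × ℝ => myG p.1 p.2) (s, t) := by
  rcases eq_or_lt_of_le ht with ht0 | htpos
  · rcases eq_or_lt_of_le hs with hs0 | hspos
    · -- s = 0, t = 0 : value is 0
      intro y hy
      have hy' : y < myG s t := hy
      have : myG s t = 0 := by
        rw [myG, if_neg (by simp [← hs0]), ← hs0, ← ht0]
        simp
      rw [this] at hy'
      exact absurd hy' (by simp)
    · -- s > 0, t = 0 : value ⊤, must show blow-up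
      intro y hy
      have hy' : y < myG s t := hy
      have hyne : y ≠ ⊤ := by
        rw [myG, if_pos ⟨ht0.symm, hspos.ne'⟩] at hy'
        exact hy'.ne
      set Y := y.toReal with hY
      set C := max 1 ((Y + 2 + 2*s) * (2/s)) with hC
      set δ := min (1/2 : ℝ) (Real.exp (Real.log (s/2) - C - 1)) with hδ
      have hδpos : 0 < δ := lt_min (by norm_num) (Real.exp_pos _)
      have hδhalf : δ ≤ 1/2 := min_le_left _ _
      have hlogδ : Real.log δ ≤ Real.log (s/2) - C - 1 := by
        calc Real.log δ ≤ Real.log (Real.exp (Real.log (s/2) - C - 1)) :=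
              Real.log_le_log hδpos (min_le_right _ _)
          _ = _ := Real.log_exp _
      have hU : {p : ℝ × ℝ | p.1 ∈ Set.Ioo (s/2) (2*s) ∧ p.2 ∈ Set.Ioo (-δ) δ} ∈ 𝓝 (s, t) := by
        rw [← ht0]
        have : IsOpen {p : ℝ × ℝ | p.1 ∈ Set.Ioo (s/2) (2*s) ∧ p.2 ∈ Set.Ioo (-δ) δ} :=
          (isOpen_Ioo.preimage continuous_fst).inter (isOpen_Ioo.preimage continuous_snd)
        refine this.mem_nhds ?_
        constructor
        · exact ⟨by linarith, by linarith⟩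
        · simp only [Set.mem_Ioo]; constructor <;> [linarith; linarith]
      filter_upwards [hU] with p hp
      show y < myG p.1 p.2
      obtain ⟨⟨hp1l, hp1r⟩, hp2l, hp2r⟩ := hp
      have hp1pos : 0 < p.1 := lt_trans (by linarith) hp1l
      by_cases hpt : p.2 = 0
      · rw [myG, if_pos ⟨hpt, hp1pos.ne'⟩]
        exact hyne.lt_top
      · rw [myG, if_neg (fun h => hpt h.1)]
        rw [ENNReal.lt_ofReal_iff_toReal_lt hyne]
        have habs : 0 < |p.2| := abs_pos.mpr hpt
        have habsδ : |p.2| < δ := abs_lt.mpr ⟨hp2l, hp2r⟩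
        have hL : C + 1 ≤ Real.log (p.1 / p.2) := by
          rw [Real.log_div hp1pos.ne' hpt, ← Real.log_abs p.2]
          have h1 : Real.log |p.2| ≤ Real.log (s/2) - C - 1 :=
            le_trans (Real.log_le_log habs habsδ.le) hlogδ
          have h2 : Real.log (s/2) ≤ Real.log p.1 :=
            Real.log_le_log (by linarith) hp1l.le
          linarith
        have hC1 : (Y + 2 + 2*s) * (2/s) ≤ C := le_max_right _ _
        have hC2 : (1:ℝ) ≤ C := le_max_left _ _
        have h3 : s/2 * (C+1) ≤ p.1 * Real.log (p.1 / p.2) :=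
          mul_le_mul hp1l.le hL (by linarith) hp1pos.le
        have e : s/2 * ((Y + 2 + 2*s) * (2/s)) = Y + 2 + 2*s := by
          field_simp
        have h4 : Y + 2 + 2*s ≤ s/2 * C := by
          rw [← e]
          exact mul_le_mul_of_nonneg_left hC1 (by linarith)
        have : Y < p.1 * Real.log (p.1/p.2) + p.2 - p.1 := by nlinarith
        exact this
  · -- t > 0 : continuity
    intro y hy
    have hy' : y < myG s t := hy
    have hcont : ContinuousAt (fun p : ℝ × ℝ =>
        ENNReal.ofReal (p.2 * (p.1/p.2 * Real.log (p.1/p.2)) + p.2 - p.1)) (s, t) := by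
      refine ENNReal.continuous_ofReal.continuousAt.comp ?_
      have hdiv : ContinuousAt (fun p : ℝ × ℝ => p.1 / p.2) (s, t) :=
        ContinuousAt.div continuousAt_fst continuousAt_snd htpos.ne'
      exact ((continuousAt_snd.mul
        ((Real.continuous_mul_log.continuousAt).comp hdiv)).add continuousAt_snd).sub
        continuousAt_fst
    have heq : ∀ᶠ p : ℝ × ℝ in 𝓝 (s, t), myG p.1 p.2
        = ENNReal.ofReal (p.2 * (p.1/p.2 * Real.log (p.1/p.2)) + p.2 - p.1) := by
      have hne : {p : ℝ × ℝ | p.2 ≠ 0} ∈ 𝓝 (s, t) :=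
        (isOpen_ne.preimage continuous_snd).mem_nhds htpos.ne'
      filter_upwards [hne] with p hp
      rw [myG, if_neg (fun h => hp h.1)]
      congr 2
      rw [← mul_assoc, mul_div_cancel₀ _ hp]
    have hval : myG s t = ENNReal.ofReal (t * (s/t * Real.log (s/t)) + t - s) := by
      rw [myG, if_neg (fun h => htpos.ne' h.1)]
      congr 2
      rw [← mul_assoc, mul_div_cancel₀ _ htpos.ne']
    rw [hval] at hy'
    filter_upwards [heq, hcont.eventually (Ioi_mem_nhds hy')] with p h1 h2
    show y < myG p.1 p.2
    rw [h1]
    exact h2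

variable {𝒳 : Type*} [Fintype 𝒳] [DecidableEq 𝒳]

lemma continuous_testEval (f : offTests 𝒳) :
    Continuous (fun ν : MSpace 𝒳 => ∑' x, ν.1 x * f.1 x) := by
  have h1 : Continuous (fun ν : MSpace 𝒳 => fun f : offTests 𝒳 => ∑' x, ν.1 x * f.1 x) :=
    continuous_induced_dom
  exact (continuous_apply f).comp h1

lemma tsum_ite_fst {ν : 𝒳 × List 𝒳 → ℝ} (hν : IsOffMeasure ν) (a : 𝒳) :
    ∑' y : 𝒳 × List 𝒳, ν y * (if y.1 = a then (1:ℝ) else 0) = marg1 ν a := by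
  have hsum : Summable (fun y : 𝒳 × List 𝒳 => ν y * (if y.1 = a then (1:ℝ) else 0)) :=
    hν.summable_mul_bounded (M := 1) (fun y => by split <;> norm_num)
  rw [hν.tsum_prod_eq hsum]
  rw [Finset.sum_eq_single a (fun b _ hb => by simp [hb]) (fun h => absurd (Finset.mem_univ a) h)]
  simp [marg1]

lemma summable_count_ite {ν : 𝒳 × List 𝒳 → ℝ} (hν : IsOffMeasure ν) (a b₀ : 𝒳) :
    Summable (fun y : 𝒳 × List 𝒳 =>
      ν y * ((mult a y.2 : ℝ) * (if y.1 = b₀ then (1:ℝ) else 0))) := by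
  refine Summable.of_abs (Summable.of_nonneg_of_le (fun y => abs_nonneg _)
    (fun y => ?_) hν.moment)
  rw [abs_mul, abs_of_nonneg (hν.nonneg y), abs_mul]
  calc ν y * (|(mult a y.2 : ℝ)| * |if y.1 = b₀ then (1:ℝ) else 0|)
      ≤ ν y * ((y.2.length : ℝ) * 1) := by
        refine mul_le_mul_of_nonneg_left (mul_le_mul ?_ ?_ (abs_nonneg _) ?_) (hν.nonneg y)
        · rw [abs_of_nonneg (by positivity)]
          exact_mod_cast List.count_le_length (a := a) (l := y.2)
        · split <;> norm_num
        · positivity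
    _ = (y.2.length : ℝ) * ν y := by ring

lemma tsum_count_eq {ν : 𝒳 × List 𝒳 → ℝ} (hν : IsOffMeasure ν) (a : 𝒳) :
    ∑ b₀ : 𝒳, ∑' y : 𝒳 × List 𝒳, ν y * ((mult a y.2 : ℝ) * (if y.1 = b₀ then (1:ℝ) else 0))
      = ∑' y : 𝒳 × List 𝒳, (mult a y.2 : ℝ) * ν y := by
  rw [← Summable.tsum_finsetSum (fun b₀ _ => summable_count_ite hν a b₀)]
  refine tsum_congr fun y => ?_
  rw [← Finset.mul_sum, ← Finset.mul_sum, Finset.sum_ite_eq Finset.univ y.1 (fun _ => (1:ℝ))]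
  simp [mul_comm]

lemma continuous_eval (x : 𝒳 × List 𝒳) : Continuous (fun ν : MSpace 𝒳 => ν.1 x) := by
  have hf : (fun y : 𝒳 × List 𝒳 => if y = x then (1:ℝ) else 0) ∈ offTests 𝒳 :=
    Or.inl ⟨1, fun y => by show |if y = x then (1:ℝ) else 0| ≤ 1; split <;> norm_num⟩
  have key : ∀ ν : MSpace 𝒳, ν.1 x = ∑' y, ν.1 y * (if y = x then (1:ℝ) else 0) := by
    intro ν
    rw [tsum_eq_single x (fun y hy => by simp [hy])]
    simp
  simp only [key]
  exact continuous_testEval ⟨_, hf⟩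

lemma continuous_marg1 (a : 𝒳) : Continuous (fun ν : MSpace 𝒳 => marg1 ν.1 a) := by
  have hf : (fun y : 𝒳 × List 𝒳 => if y.1 = a then (1:ℝ) else 0) ∈ offTests 𝒳 :=
    Or.inl ⟨1, fun y => by show |if y.1 = a then (1:ℝ) else 0| ≤ 1; split <;> norm_num⟩
  have key : ∀ ν : MSpace 𝒳, marg1 ν.1 a = ∑' y, ν.1 y * (if y.1 = a then (1:ℝ) else 0) :=
    fun ν => (tsum_ite_fst ν.2 a).symm
  simp only [key]
  exact continuous_testEval ⟨_, hf⟩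

lemma continuous_countSum (a : 𝒳) :
    Continuous (fun ν : MSpace 𝒳 => ∑' y : 𝒳 × List 𝒳, (mult a y.2 : ℝ) * ν.1 y) := by
  have key : ∀ ν : MSpace 𝒳, ∑' y : 𝒳 × List 𝒳, (mult a y.2 : ℝ) * ν.1 y
      = ∑ b₀ : 𝒳, ∑' y : 𝒳 × List 𝒳,
          ν.1 y * ((mult a y.2 : ℝ) * (if y.1 = b₀ then (1:ℝ) else 0)) :=
    fun ν => (tsum_count_eq ν.2 a).symm
  simp only [key]
  refine continuous_finset_sum _ (fun b₀ _ => ?_)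
  have hf : (fun y : 𝒳 × List 𝒳 => (mult a y.2 : ℝ) * (if y.1 = b₀ then (1:ℝ) else 0))
      ∈ offTests 𝒳 := Or.inr ⟨a, b₀, rfl⟩
  exact continuous_testEval ⟨_, hf⟩

lemma isClosed_shiftInv : IsClosed {ν : MSpace 𝒳 | ShiftInv ν.1} := by
  have he : {ν : MSpace 𝒳 | ShiftInv ν.1}
      = ⋂ a : 𝒳, {ν : MSpace 𝒳 |
          marg1 ν.1 a = ∑' y : 𝒳 × List 𝒳, (mult a y.2 : ℝ) * ν.1 y} := by
    ext ν
    simp [ShiftInv, Set.mem_iInter]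
  rw [he]
  exact isClosed_iInter fun a => isClosed_eq (continuous_marg1 a) (continuous_countSum a)

lemma lsc_sup {α : Type*} [TopologicalSpace α] {f g : α → ℝ≥0∞}
    (hf : LowerSemicontinuous f) (hg : LowerSemicontinuous g) :
    LowerSemicontinuous (fun x => max (f x) (g x)) := by
  intro x y hy
  rcases lt_max_iff.mp hy with h | h
  · exact (hf x y h).mono fun x' h' => lt_max_iff.mpr (Or.inl h')
  · exact (hg x y h).mono fun x' h' => lt_max_iff.mpr (Or.inr h')

lemma offRate_eq_max (𝒬 : 𝒳 → List 𝒳 → ℝ) (ν : MSpace 𝒳) :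
    offRate 𝒬 ν.1 = max (∑' x : 𝒳 × List 𝒳, myG (ν.1 x) (marg1 ν.1 x.1 * 𝒬 x.1 x.2))
      (if ShiftInv ν.1 then 0 else ⊤) := by
  rw [offRate]
  split_ifs with h
  · rw [relEnt_eq_tsum_myG]
    simp
  · simp

lemma offRate_lsc (𝒬 : 𝒳 → List 𝒳 → ℝ) (h𝒬_nonneg : ∀ a c, 0 ≤ 𝒬 a c) :
    LowerSemicontinuous (fun ν : MSpace 𝒳 => offRate 𝒬 ν.1) := by
  have he : (fun ν : MSpace 𝒳 => offRate 𝒬 ν.1)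
      = fun ν => max (∑' x : 𝒳 × List 𝒳, myG (ν.1 x) (marg1 ν.1 x.1 * 𝒬 x.1 x.2))
          (if ShiftInv ν.1 then 0 else ⊤) := funext (offRate_eq_max 𝒬)
  rw [he]
  refine lsc_sup ?_ ?_
  · have he2 : (fun ν : MSpace 𝒳 => ∑' x : 𝒳 × List 𝒳, myG (ν.1 x) (marg1 ν.1 x.1 * 𝒬 x.1 x.2))
        = fun ν => ⨆ s : Finset (𝒳 × List 𝒳),
            ∑ x ∈ s, myG (ν.1 x) (marg1 ν.1 x.1 * 𝒬 x.1 x.2) :=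
      funext fun ν => ENNReal.tsum_eq_iSup_sum
    rw [he2]
    refine lowerSemicontinuous_iSup fun s => lowerSemicontinuous_sum fun x _ => ?_
    intro ν
    have hcont : ContinuousAt (fun ν : MSpace 𝒳 => (ν.1 x, marg1 ν.1 x.1 * 𝒬 x.1 x.2)) ν :=
      ((continuous_eval x).prodMk ((continuous_marg1 x.1).mul continuous_const)).continuousAt
    exact LowerSemicontinuousAt.comp
      (f := fun p : ℝ × ℝ => myG p.1 p.2)
      (g := fun ν : MSpace 𝒳 => (ν.1 x, marg1 ν.1 x.1 * 𝒬 x.1 x.2))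
      (myG_lsc_at (ν.2.nonneg x)
        (mul_nonneg (ν.2.marg1_nonneg x.1) (h𝒬_nonneg x.1 x.2))) hcont
  · intro ν y hy
    have hy' : y < (if ShiftInv ν.1 then (0:ℝ≥0∞) else ⊤) := hy
    by_cases h : ShiftInv ν.1
    · rw [if_pos h] at hy'
      exact absurd hy' (by simp)
    · have hyt : y < ⊤ := by
        rw [if_neg h] at hy'
        exact hy' 
      have hop : {ν' : MSpace 𝒳 | ¬ ShiftInv ν'.1} ∈ 𝓝 ν := by
        have : {ν' : MSpace 𝒳 | ¬ ShiftInv ν'.1} = {ν' : MSpace 𝒳 | ShiftInv ν'.1}ᶜ := rfl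
        rw [this]
        exact isClosed_shiftInv.isOpen_compl.mem_nhds h
      filter_upwards [hop] with ν' h'
      show y < (if ShiftInv ν'.1 then (0:ℝ≥0∞) else ⊤)
      rw [if_neg h']
      exact hyt

end LSCsec


section Part3A

variable {𝒳 : Type*} [Fintype 𝒳] [DecidableEq 𝒳]
variable (𝒬 : 𝒳 → List 𝒳 → ℝ)

lemma le_offRateVar (ν : 𝒳 × List 𝒳 → ℝ) {g : 𝒳 × List 𝒳 → ℝ} {M : ℝ} (hg : ∀ x, |g x| ≤ M) :
    ((∑' x : 𝒳 × List 𝒳, ν x * (g x - (x.2.map (Ug 𝒬 g)).sum) : ℝ) : EReal)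
      ≤ offRateVar 𝒬 ν :=
  le_iSup (fun g' : {g : 𝒳 × List 𝒳 → ℝ // ∃ M : ℝ, ∀ x, |g x| ≤ M} =>
    ((∑' x : 𝒳 × List 𝒳, ν x * (g'.1 x - (x.2.map (Ug 𝒬 g'.1)).sum) : ℝ) : EReal))
    ⟨g, M, hg⟩

lemma ereal_exists_real_lt (b : EReal) (hb : b < ⊤) : ∃ r : ℝ, b < (r : EReal) := by
  induction b using EReal.rec with
  | bot => exact ⟨0, EReal.bot_lt_coe 0⟩
  | coe r => exact ⟨r + 1, EReal.coe_lt_coe_iff.mpr (lt_add_one r)⟩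
  | top => exact absurd hb (lt_irrefl _)

variable (h𝒬_sum : ∀ a, HasSum (𝒬 a) 1)
variable {ν : 𝒳 × List 𝒳 → ℝ} (hν : IsOffMeasure ν)

include h𝒬_sum hν

lemma phi_indicator (a : 𝒳) (t : ℝ) :
    ∑' x : 𝒳 × List 𝒳, ν x * ((fun y : 𝒳 × List 𝒳 => t * (if y.1 = a then (1:ℝ) else 0)) x
        - (x.2.map (Ug 𝒬 (fun y : 𝒳 × List 𝒳 => t * (if y.1 = a then (1:ℝ) else 0)))).sum)
      = t * (marg1 ν a - ∑' x : 𝒳 × List 𝒳, (mult a x.2 : ℝ) * ν x) := by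
  set g : 𝒳 × List 𝒳 → ℝ := fun y => t * (if y.1 = a then (1:ℝ) else 0) with hgdef
  have hUg : ∀ b, Ug 𝒬 g b = t * (if b = a then (1:ℝ) else 0) := by
    intro b
    rw [Ug]
    have he : ∀ c : List 𝒳, g (b, c) = t * (if b = a then (1:ℝ) else 0) := fun c => rfl
    rw [tsum_congr (fun c => by rw [he c]),
      tsum_mul_right, (h𝒬_sum b).tsum_eq, one_mul, Real.log_exp]
  have hmap : ∀ l : List 𝒳, (l.map (Ug 𝒬 g)).sum = t * (l.count a : ℝ) := by
    intro l
    rw [show l.map (Ug 𝒬 g) = l.map (fun b => t * (if b = a then (1:ℝ) else 0)) from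
      List.map_congr_left (fun b _ => hUg b)]
    rw [list_map_sum_count]
    rw [Finset.sum_eq_single a (fun b _ hb => by simp [hb]) (fun h => absurd (Finset.mem_univ a) h)]
    simp [mul_comm]
  have sA : Summable (fun x : 𝒳 × List 𝒳 => ν x * (if x.1 = a then (1:ℝ) else 0)) :=
    hν.summable_mul_bounded (M := 1) (fun y => by
      show |if y.1 = a then (1:ℝ) else 0| ≤ 1
      split <;> norm_num)
  have sB : Summable (fun x : 𝒳 × List 𝒳 => (x.2.count a : ℝ) * ν x) := hν.summable_count_mul a
  calc ∑' x : 𝒳 × List 𝒳, ν x * (g x - (x.2.map (Ug 𝒬 g)).sum)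
      = ∑' x : 𝒳 × List 𝒳,
          (t * (ν x * (if x.1 = a then (1:ℝ) else 0)) - t * ((x.2.count a : ℝ) * ν x)) := by
        refine tsum_congr fun x => ?_
        rw [hmap x.2, hgdef]
        ring
    _ = t * (∑' x : 𝒳 × List 𝒳, ν x * (if x.1 = a then (1:ℝ) else 0))
        - t * ∑' x : 𝒳 × List 𝒳, (x.2.count a : ℝ) * ν x := by
        rw [Summable.tsum_sub (sA.mul_left t) (sB.mul_left t), tsum_mul_left, tsum_mul_left]
    _ = _ := by
        rw [tsum_ite_fst hν a]
        simp only [mult]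
        ring

lemma phi_zero :
    ∑' x : 𝒳 × List 𝒳,
        ν x * ((fun _ : 𝒳 × List 𝒳 => (0:ℝ)) x
          - (x.2.map (Ug 𝒬 (fun _ : 𝒳 × List 𝒳 => (0:ℝ)))).sum) = 0 := by
  have hUg : ∀ b, Ug 𝒬 (fun _ : 𝒳 × List 𝒳 => (0:ℝ)) b = 0 := by
    intro b
    rw [Ug]
    have he : ∀ c : List 𝒳, 𝒬 b c * Real.exp ((fun _ : 𝒳 × List 𝒳 => (0:ℝ)) (b, c)) = 𝒬 b c :=
      fun c => by simp
    rw [tsum_congr he, (h𝒬_sum b).tsum_eq, Real.log_one]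
  have hmap : ∀ l : List 𝒳, (l.map (Ug 𝒬 (fun _ : 𝒳 × List 𝒳 => (0:ℝ)))).sum = 0 := by
    intro l
    refine List.sum_eq_zero fun y hy => ?_
    obtain ⟨b, _, rfl⟩ := List.mem_map.mp hy
    exact hUg b
  calc ∑' x : 𝒳 × List 𝒳, ν x * ((fun _ : 𝒳 × List 𝒳 => (0:ℝ)) x
          - (x.2.map (Ug 𝒬 (fun _ : 𝒳 × List 𝒳 => (0:ℝ)))).sum)
      = ∑' _x : 𝒳 × List 𝒳, (0:ℝ) := tsum_congr fun x => by rw [hmap x.2]; simp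
    _ = 0 := tsum_zero

lemma offRateVar_top_of_not_shiftInv (h : ¬ ShiftInv ν) : offRateVar 𝒬 ν = ⊤ := by
  rw [ShiftInv] at h
  push_neg at h
  obtain ⟨a, hd⟩ := h
  set R := ∑' x : 𝒳 × List 𝒳, (mult a x.2 : ℝ) * ν x with hR
  have hdne : marg1 ν a - R ≠ 0 := sub_ne_zero.mpr hd
  rw [offRateVar, iSup_eq_top]
  intro b hb
  obtain ⟨r, hr⟩ := ereal_exists_real_lt b hb
  set t : ℝ := (r + 1) / (marg1 ν a - R) with ht
  refine ⟨⟨fun y => t * (if y.1 = a then (1:ℝ) else 0), |t|, fun y => by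
    show |t * (if y.1 = a then (1:ℝ) else 0)| ≤ |t|
    rw [abs_mul]
    calc |t| * |if y.1 = a then (1:ℝ) else 0| ≤ |t| * 1 := by
          refine mul_le_mul_of_nonneg_left ?_ (abs_nonneg t)
          split <;> norm_num
      _ = |t| := mul_one _⟩, ?_⟩
  refine lt_trans hr ?_
  rw [EReal.coe_lt_coe_iff]
  have := phi_indicator 𝒬 h𝒬_sum hν a t
  simp only at this ⊢
  rw [this, ht, div_mul_cancel₀ _ hdne]
  linarith

lemma phi_point {x0 : 𝒳 × List 𝒳} (hQ : 𝒬 x0.1 x0.2 = 0) (t : ℝ) :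
    ∑' x : 𝒳 × List 𝒳, ν x * ((fun y : 𝒳 × List 𝒳 => t * (if y = x0 then (1:ℝ) else 0)) x
        - (x.2.map (Ug 𝒬 (fun y : 𝒳 × List 𝒳 => t * (if y = x0 then (1:ℝ) else 0)))).sum)
      = t * ν x0 := by
  set g : 𝒳 × List 𝒳 → ℝ := fun y => t * (if y = x0 then (1:ℝ) else 0) with hgdef
  have hUg : ∀ b, Ug 𝒬 g b = 0 := by
    intro b
    rw [Ug]
    have he : ∀ c : List 𝒳, 𝒬 b c * Real.exp (g (b, c)) = 𝒬 b c := by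
      intro c
      by_cases h : (b, c) = x0
      · have hz : 𝒬 b c = 0 := by
          rw [show b = x0.1 from congrArg Prod.fst h, show c = x0.2 from congrArg Prod.snd h]
          exact hQ
        rw [hz, zero_mul]
      · rw [hgdef]
        simp [h]
    rw [tsum_congr he, (h𝒬_sum b).tsum_eq, Real.log_one]
  have hmap : ∀ l : List 𝒳, (l.map (Ug 𝒬 g)).sum = 0 := by
    intro l
    refine List.sum_eq_zero fun y hy => ?_
    obtain ⟨b, _, rfl⟩ := List.mem_map.mp hy
    exact hUg b
  calc ∑' x : 𝒳 × List 𝒳, ν x * (g x - (x.2.map (Ug 𝒬 g)).sum)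
      = ∑' x : 𝒳 × List 𝒳, ν x * g x := by
        refine tsum_congr fun x => ?_
        rw [hmap x.2, sub_zero]
    _ = t * ν x0 := by
        rw [tsum_eq_single x0 (fun y hy => by
          rw [hgdef]
          simp [hy])]
        rw [hgdef]
        simp [mul_comm]

end Part3A


section Part3B

variable {𝒳 : Type*} [Fintype 𝒳] [DecidableEq 𝒳]
variable (𝒬 : 𝒳 → List 𝒳 → ℝ) (h𝒬_nonneg : ∀ a c, 0 ≤ 𝒬 a c) (h𝒬_sum : ∀ a, HasSum (𝒬 a) 1)
variable {ν : 𝒳 × List 𝒳 → ℝ} (hν : IsOffMeasure ν)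

include h𝒬_nonneg h𝒬_sum hν

lemma phi_ge (hSI : ShiftInv ν)
    (hAC : ∀ x : 𝒳 × List 𝒳, marg1 ν x.1 * 𝒬 x.1 x.2 = 0 → ν x = 0)
    {r : ℝ}
    (hr : ENNReal.ofReal r < relEnt ν (fun x : 𝒳 × List 𝒳 => marg1 ν x.1 * 𝒬 x.1 x.2)) :
    ∃ (g : 𝒳 × List 𝒳 → ℝ) (M : ℝ), (∀ x, |g x| ≤ M) ∧
      r < ∑' x : 𝒳 × List 𝒳, ν x * (g x - (x.2.map (Ug 𝒬 g)).sum) := by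
  classical
  set ρ : 𝒳 × List 𝒳 → ℝ := fun x => marg1 ν x.1 * 𝒬 x.1 x.2 with hρdef
  have hρ_nonneg : ∀ x, 0 ≤ ρ x := fun x =>
    mul_nonneg (hν.marg1_nonneg x.1) (h𝒬_nonneg x.1 x.2)
  set f : 𝒳 × List 𝒳 → ℝ := fun x => ν x * Real.log (ν x / ρ x) + ρ x - ν x with hfdef
  rw [relEnt, if_pos hAC, ENNReal.tsum_eq_iSup_sum] at hr
  rw [lt_iSup_iff] at hr
  obtain ⟨F, hF⟩ := hr
  set F' := F.filter (fun x => 0 < f x) with hF'def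
  have h1 : ∑ x ∈ F', ENNReal.ofReal (f x) = ∑ x ∈ F, ENNReal.ofReal (f x) :=
    Finset.sum_filter_of_ne (fun x _ hne => by
      by_contra hc
      push_neg at hc
      exact hne (ENNReal.ofReal_eq_zero.mpr hc))
  have h2 : ∑ x ∈ F', ENNReal.ofReal (f x) = ENNReal.ofReal (∑ x ∈ F', f x) :=
    (ENNReal.ofReal_sum_of_nonneg (fun x hx => ((Finset.mem_filter.mp hx).2).le)).symm
  set S := ∑ x ∈ F', f x with hSdef
  have hrS : r < S := by
    by_contra hc
    push_neg at hc
    rw [← h1, h2] at hF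
    exact absurd hF (not_lt.mpr (ENNReal.ofReal_le_ofReal hc))
  have hfpos : ∀ x ∈ F', 0 < f x := fun x hx => (Finset.mem_filter.mp hx).2
  have hρpos : ∀ x ∈ F', 0 < ρ x := by
    intro x hx
    rcases (hρ_nonneg x).lt_or_eq with h | h
    · exact h
    · exfalso
      have hν0 : ν x = 0 := hAC x h.symm
      have : f x = 0 := by rw [hfdef]; simp [hν0, ← h]
      exact absurd this (hfpos x hx).ne'
  set F₀ := F'.filter (fun x => ν x ≠ 0) with hF₀def
  set F₁ := F'.filter (fun x => ν x = 0) with hF₁def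
  have hF₀sub : F₀ ⊆ F' := Finset.filter_subset _ _
  have hF₁sub : F₁ ⊆ F' := Finset.filter_subset _ _
  have hνpos : ∀ x ∈ F₀, 0 < ν x := fun x hx =>
    lt_of_le_of_ne (hν.nonneg x) (Ne.symm (Finset.mem_filter.mp hx).2)
  have hf1 : ∀ x ∈ F₁, f x = ρ x := by
    intro x hx
    have h0 := (Finset.mem_filter.mp hx).2
    rw [hfdef]
    simp [h0]
  set P := ∑ x ∈ F₁, f x with hPdef
  have hP0 : 0 ≤ P := Finset.sum_nonneg fun x hx => (hfpos x (hF₁sub hx)).le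
  have hSsplit : ∑ x ∈ F₀, f x + P = S := by
    rw [hPdef, hF₁def, show F'.filter (fun x => ν x = 0) = F'.filter (fun x => ¬ ν x ≠ 0) from
      Finset.filter_congr (fun x _ => by simp), hF₀def, hSdef]
    exact Finset.sum_filter_add_sum_filter_not F' _ f
  set ε := S - r with hεdef
  have hε : 0 < ε := by rw [hεdef]; linarith
  set δ := min 1 (ε / (P + 1)) with hδdef
  have hδ0 : 0 < δ := lt_min one_pos (div_pos hε (by linarith))
  have hδ1 : δ ≤ 1 := min_le_left _ _
  have hδP : δ * P < ε := by
    calc δ * P ≤ (ε / (P + 1)) * P :=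
          mul_le_mul_of_nonneg_right (min_le_right _ _) hP0
      _ < ε := by
          rw [div_mul_eq_mul_div, div_lt_iff₀ (by linarith : (0:ℝ) < P + 1)]
          nlinarith
  -- the test function
  set g : 𝒳 × List 𝒳 → ℝ := fun x =>
    if x ∈ F₀ then Real.log (ν x / ρ x) else if x ∈ F₁ then Real.log δ else 0 with hgdef
  set M := (∑ x ∈ F₀, |Real.log (ν x / ρ x)|) + |Real.log δ| with hMdef
  have hsum_abs_nonneg : 0 ≤ ∑ x ∈ F₀, |Real.log (ν x / ρ x)| :=
    Finset.sum_nonneg fun x _ => abs_nonneg _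
  have hMb : ∀ x, |g x| ≤ M := by
    intro x
    rw [hgdef]
    show |if x ∈ F₀ then Real.log (ν x / ρ x) else if x ∈ F₁ then Real.log δ else 0| ≤ M
    split_ifs with hx1 hx2
    · exact le_add_of_le_of_nonneg
        (Finset.single_le_sum (f := fun y => |Real.log (ν y / ρ y)|)
          (fun i _ => abs_nonneg _) hx1) (abs_nonneg _)
    · exact le_add_of_nonneg_of_le hsum_abs_nonneg le_rfl
    · rw [abs_zero]; positivity
  have hgexp : ∀ x, Real.exp (g x) = if x ∈ F₀ then ν x / ρ x else if x ∈ F₁ then δ else 1 := by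
    intro x
    rw [hgdef]
    show Real.exp (if x ∈ F₀ then Real.log (ν x / ρ x) else if x ∈ F₁ then Real.log δ else 0) = _
    split_ifs with hx1 hx2
    · exact Real.exp_log (div_pos (hνpos x hx1) (hρpos x (hF₀sub hx1)))
    · exact Real.exp_log hδ0
    · exact Real.exp_zero
  refine ⟨g, M, hMb, ?_⟩
  -- S_b computation
  set t₂ : Finset (List 𝒳) := (F₀ ∪ F₁).image Prod.snd with ht₂def
  have hq0 : ∀ (b : 𝒳) (c : List 𝒳), (b, c) ∉ F₀ ∪ F₁ →
      𝒬 b c * (Real.exp (g (b, c)) - 1) = 0 := by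
    intro b c h
    have h0 : (b, c) ∉ F₀ := fun hh => h (Finset.mem_union_left _ hh)
    have h1 : (b, c) ∉ F₁ := fun hh => h (Finset.mem_union_right _ hh)
    rw [hgexp, if_neg h0, if_neg h1]
    ring
  have hq_out : ∀ b : 𝒳, ∀ c ∉ t₂, 𝒬 b c * (Real.exp (g (b, c)) - 1) = 0 := by
    intro b c hc
    refine hq0 b c fun hin => hc ?_
    exact Finset.mem_image_of_mem Prod.snd hin
  have hq_summable : ∀ b : 𝒳, Summable (fun c => 𝒬 b c * (Real.exp (g (b, c)) - 1)) :=
    fun b => summable_of_ne_finset_zero (s := t₂) (hq_out b)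
  have hSb_eq : ∀ b : 𝒳, ∑' c : List 𝒳, 𝒬 b c * Real.exp (g (b, c))
      = 1 + ∑ c ∈ t₂, 𝒬 b c * (Real.exp (g (b, c)) - 1) := by
    intro b
    have hsplit : ∀ c : List 𝒳, 𝒬 b c * Real.exp (g (b, c))
        = 𝒬 b c + 𝒬 b c * (Real.exp (g (b, c)) - 1) := fun c => by ring
    rw [tsum_congr hsplit, Summable.tsum_add (h𝒬_sum b).summable (hq_summable b), (h𝒬_sum b).tsum_eq,
      tsum_eq_sum (hq_out b)]
  set B := ∑ b : 𝒳, marg1 ν b * ∑' c : List 𝒳, 𝒬 b c * Real.exp (g (b, c)) with hBdef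
  -- value of B
  have hdisj : Disjoint F₀ F₁ := by
    rw [hF₀def, hF₁def]
    exact Finset.disjoint_filter_filter' F' F' (disjoint_compl_left.mono_left fun x hx => hx)
  have hBval : B = 1 + ((∑ x ∈ F₀, (ν x - ρ x)) + (δ - 1) * ∑ x ∈ F₁, ρ x) := by
    rw [hBdef]
    have e1 : ∀ b ∈ Finset.univ (α := 𝒳), marg1 ν b * ∑' c : List 𝒳, 𝒬 b c * Real.exp (g (b, c))
        = marg1 ν b + ∑ c ∈ t₂, ρ (b, c) * (Real.exp (g (b, c)) - 1) := by
      intro b _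
      rw [hSb_eq b, mul_add, mul_one, Finset.mul_sum]
      congr 1
      exact Finset.sum_congr rfl fun c _ => by rw [hρdef]; ring
    rw [Finset.sum_congr rfl e1, Finset.sum_add_distrib, hν.sum_marg1]
    congr 1
    rw [← Finset.sum_product (s := Finset.univ) (t := t₂)
      (f := fun x : 𝒳 × List 𝒳 => ρ x * (Real.exp (g x) - 1))]
    have hsub : F₀ ∪ F₁ ⊆ Finset.univ ×ˢ t₂ := by
      intro x hx
      rw [Finset.mem_product]
      exact ⟨Finset.mem_univ _, Finset.mem_image_of_mem Prod.snd hx⟩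
    have hzero : ∀ x ∈ Finset.univ ×ˢ t₂, x ∉ F₀ ∪ F₁ →
        ρ x * (Real.exp (g x) - 1) = 0 := by
      intro x _ hx
      rw [hgexp]
      have h0 : x ∉ F₀ := fun hh => hx (Finset.mem_union_left _ hh)
      have h1 : x ∉ F₁ := fun hh => hx (Finset.mem_union_right _ hh)
      rw [if_neg h0, if_neg h1]
      ring
    have e2 : ∑ x ∈ Finset.univ ×ˢ t₂, ρ x * (Real.exp (g x) - 1)
        = ∑ x ∈ F₀ ∪ F₁, ρ x * (Real.exp (g x) - 1) := by
      refine (Finset.sum_subset hsub hzero).symm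
    rw [e2, Finset.sum_union hdisj]
    congr 1
    · refine Finset.sum_congr rfl fun x hx => ?_
      have hρx : ρ x ≠ 0 := (hρpos x (hF₀sub hx)).ne'
      rw [hgexp, if_pos hx, mul_sub, mul_one, mul_div_cancel₀ _ hρx]
    · rw [Finset.mul_sum]
      refine Finset.sum_congr rfl fun x hx => ?_
      have h0 : x ∉ F₀ := Finset.disjoint_right.mp hdisj hx
      rw [hgexp, if_neg h0, if_pos hx]
      ring
  have hSbpos : ∀ b : 𝒳, 0 < ∑' c : List 𝒳, 𝒬 b c * Real.exp (g (b, c)) :=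
    fun b => Q_exp_pos 𝒬 h𝒬_nonneg h𝒬_sum hMb b
  have hBpos : 0 < B := by
    have hBge : Real.exp (-M) ≤ B := by
      calc Real.exp (-M) = ∑ b : 𝒳, marg1 ν b * Real.exp (-M) := by
            rw [← Finset.sum_mul, hν.sum_marg1, one_mul]
        _ ≤ B := by
            rw [hBdef]
            exact Finset.sum_le_sum fun b _ => mul_le_mul_of_nonneg_left
              (Q_exp_lower 𝒬 h𝒬_nonneg h𝒬_sum hMb b) (hν.marg1_nonneg b)
    exact lt_of_lt_of_le (Real.exp_pos _) hBge
  -- Jensen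
  have hJensen : ∑ b : 𝒳, marg1 ν b * Ug 𝒬 g b ≤ Real.log B := by
    have hcc := (strictConcaveOn_log_Ioi.concaveOn).le_map_sum
      (t := Finset.univ) (w := fun b => marg1 ν b)
      (p := fun b => ∑' c : List 𝒳, 𝒬 b c * Real.exp (g (b, c)))
      (fun b _ => hν.marg1_nonneg b) hν.sum_marg1
      (fun b _ => Set.mem_Ioi.mpr (hSbpos b))
    simp only [smul_eq_mul] at hcc
    exact hcc
  have hlogB : Real.log B ≤ B - 1 := Real.log_le_sub_one_of_pos hBpos
  -- the ν·g sum
  have hνg : ∑' x : 𝒳 × List 𝒳, ν x * g x = ∑ x ∈ F₀, ν x * Real.log (ν x / ρ x) := by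
    rw [tsum_eq_sum (s := F₀) (fun x hx => ?_)]
    · refine Finset.sum_congr rfl fun x hx => ?_
      rw [hgdef]
      show ν x * (if x ∈ F₀ then Real.log (ν x / ρ x) else _) = _
      rw [if_pos hx]
    · rw [hgdef]
      show ν x * (if x ∈ F₀ then Real.log (ν x / ρ x) else if x ∈ F₁ then Real.log δ else 0) = 0
      rw [if_neg hx]
      split_ifs with hx1
      · rw [(Finset.mem_filter.mp hx1).2, zero_mul]
      · rw [mul_zero]
  -- main computation
  rw [T_eq 𝒬 hν hMb]
  have hcount : ∀ a : 𝒳, ∑' x : 𝒳 × List 𝒳, (x.2.count a : ℝ) * ν x = marg1 ν a := by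
    intro a
    have := hSI a
    simp only [mult] at this
    exact this.symm
  have e3 : ∑ a : 𝒳, Ug 𝒬 g a * ∑' x : 𝒳 × List 𝒳, (x.2.count a : ℝ) * ν x
      = ∑ a : 𝒳, marg1 ν a * Ug 𝒬 g a := by
    refine Finset.sum_congr rfl fun a _ => ?_
    rw [hcount a, mul_comm]
  rw [hνg, e3]
  have hfeq : ∑ x ∈ F₀, ν x * Real.log (ν x / ρ x) - (∑ x ∈ F₀, (ν x - ρ x))
      = ∑ x ∈ F₀, f x := by
    rw [← Finset.sum_sub_distrib]
    exact Finset.sum_congr rfl fun x _ => by rw [hfdef]; ring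
  have hfP : ∑ x ∈ F₁, ρ x = P := by
    rw [hPdef]
    exact (Finset.sum_congr rfl hf1).symm
  have : ∑ a : 𝒳, marg1 ν a * Ug 𝒬 g a ≤ B - 1 := le_trans hJensen hlogB
  rw [hBval, hfP] at this
  have htarget : r < ∑ x ∈ F₀, ν x * Real.log (ν x / ρ x)
      - (∑ x ∈ F₀, (ν x - ρ x) + (δ - 1) * P) := by
    have e4 : ∑ x ∈ F₀, ν x * Real.log (ν x / ρ x)
        - (∑ x ∈ F₀, (ν x - ρ x) + (δ - 1) * P) = ∑ x ∈ F₀, f x + (1 - δ) * P := by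
      rw [← hfeq]; ring
    rw [e4]
    have : ∑ x ∈ F₀, f x + (1 - δ) * P = S - δ * P := by
      rw [← hSsplit]; ring
    rw [this]
    rw [hεdef] at hδP
    linarith
  linarith
end Part3B

section Statement11

variable {𝒳 : Type*} [Fintype 𝒳] [DecidableEq 𝒳]

theorem offspring_rate_convex_lsc_le_variational
    (𝒬 : 𝒳 → List 𝒳 → ℝ) (h𝒬_nonneg : ∀ a c, 0 ≤ 𝒬 a c) (h𝒬_sum : ∀ a, HasSum (𝒬 a) 1)
    (J : MSpace 𝒳 → ℝ≥0∞) (hJ : ∀ ν, J ν = offRate 𝒬 ν.1) :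
    -- `J` is convex
    (∀ (ν ν' : MSpace 𝒳) (θ : ℝ), 0 ≤ θ → θ ≤ 1 →
      ∀ h : IsOffMeasure (fun x => θ * ν.1 x + (1 - θ) * ν'.1 x),
        J ⟨fun x => θ * ν.1 x + (1 - θ) * ν'.1 x, h⟩
          ≤ ENNReal.ofReal θ * J ν + ENNReal.ofReal (1 - θ) * J ν') ∧
    -- `J` is lower semicontinuous
    LowerSemicontinuous J ∧
    -- `J ≤ Ĵ`
    (∀ ν : MSpace 𝒳, (J ν : EReal) ≤ offRateVar 𝒬 ν.1) := by
  refine ⟨?_, ?_, ?_⟩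
  · -- convexity
    intro ν ν' θ hθ0 hθ1 h
    simp only [hJ]
    refine (hJ _).trans_le ?_
    rcases eq_or_lt_of_le hθ0 with h0 | h0
    · have he : (fun x => θ * ν.1 x + (1 - θ) * ν'.1 x) = ν'.1 := by
        funext x
        rw [← h0]
        ring
      show offRate 𝒬 (fun x => θ * ν.1 x + (1 - θ) * ν'.1 x)
        ≤ ENNReal.ofReal θ * offRate 𝒬 ν.1 + ENNReal.ofReal (1 - θ) * offRate 𝒬 ν'.1
      rw [he, ← h0]
      simp
    rcases eq_or_lt_of_le hθ1 with h1 | h1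
    · have he : (fun x => θ * ν.1 x + (1 - θ) * ν'.1 x) = ν.1 := by
        funext x
        rw [h1]
        ring
      show offRate 𝒬 (fun x => θ * ν.1 x + (1 - θ) * ν'.1 x)
        ≤ ENNReal.ofReal θ * offRate 𝒬 ν.1 + ENNReal.ofReal (1 - θ) * offRate 𝒬 ν'.1
      rw [he, h1]
      simp
    · exact offRate_convex 𝒬 h𝒬_nonneg ν.2 ν'.2 h0 h1
  · -- lower semicontinuity
    have he : J = fun ν : MSpace 𝒳 => offRate 𝒬 ν.1 := funext hJ
    rw [he]
    exact offRate_lsc 𝒬 h𝒬_nonneg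
  · -- J ≤ Ĵ
    intro ν
    rw [hJ]
    by_cases hSI : ShiftInv ν.1
    · by_cases hAC : ∀ x : 𝒳 × List 𝒳, marg1 ν.1 x.1 * 𝒬 x.1 x.2 = 0 → ν.1 x = 0
      · rw [offRate, if_pos hSI]
        refine le_of_forall_lt fun c hc => ?_
        obtain ⟨r, hcr, hr⟩ := EReal.exists_between_coe_real hc
        refine lt_of_lt_of_le hcr ?_
        rcases lt_or_ge r 0 with hr0 | hr0
        · have h0 : ((0:ℝ) : EReal) ≤ offRateVar 𝒬 ν.1 := by
            have := le_offRateVar 𝒬 ν.1 (g := fun _ : 𝒳 × List 𝒳 => (0:ℝ)) (M := 0)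
              (fun x => by simp)
            rwa [phi_zero 𝒬 h𝒬_sum ν.2] at this
          exact le_trans (le_of_lt (EReal.coe_lt_coe_iff.mpr hr0)) h0
        · have hc' : ((ENNReal.ofReal r : ℝ≥0∞) : EReal)
              < ((relEnt ν.1 (fun x : 𝒳 × List 𝒳 => marg1 ν.1 x.1 * 𝒬 x.1 x.2) : ℝ≥0∞) : EReal) := by
            rw [EReal.coe_ennreal_ofReal, max_eq_left hr0]
            exact hr
          have hr' := EReal.coe_ennreal_lt_coe_ennreal_iff.mp hc'
          obtain ⟨g, M, hgM, hΦ⟩ := phi_ge 𝒬 h𝒬_nonneg h𝒬_sum ν.2 hSI hAC hr'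
          exact le_trans (le_of_lt (EReal.coe_lt_coe_iff.mpr hΦ)) (le_offRateVar 𝒬 ν.1 hgM)
      · push_neg at hAC
        obtain ⟨x0, hρ0, hν0⟩ := hAC
        have hνx0 : 0 < ν.1 x0 := lt_of_le_of_ne (ν.2.nonneg x0) (Ne.symm hν0)
        have hQ0 : 𝒬 x0.1 x0.2 = 0 := by
          rcases mul_eq_zero.mp hρ0 with h | h
          · exact absurd h (ne_of_gt (lt_of_lt_of_le hνx0 (ν.2.le_marg1 x0)))
          · exact h
        have htop : offRateVar 𝒬 ν.1 = ⊤ := by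
          rw [offRateVar, iSup_eq_top]
          intro b hb
          obtain ⟨r, hrb⟩ := ereal_exists_real_lt b hb
          set t := (r + 1) / ν.1 x0 with htdef
          refine ⟨⟨fun y => t * (if y = x0 then (1:ℝ) else 0), |t|, fun y => by
            show |t * (if y = x0 then (1:ℝ) else 0)| ≤ |t|
            rw [abs_mul]
            calc |t| * |if y = x0 then (1:ℝ) else 0| ≤ |t| * 1 := by
                  refine mul_le_mul_of_nonneg_left ?_ (abs_nonneg t)
                  split <;> norm_num
              _ = |t| := mul_one _⟩, ?_⟩
          refine lt_trans hrb ?_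
          rw [EReal.coe_lt_coe_iff]
          have hpp := phi_point 𝒬 h𝒬_sum ν.2 hQ0 t
          simp only at hpp ⊢
          rw [hpp, htdef, div_mul_cancel₀ _ hνx0.ne']
          linarith
        rw [htop]
        exact le_top
    · rw [offRate, if_neg hSI, offRateVar_top_of_not_shiftInv 𝒬 h𝒬_sum ν.2 hSI]
      exact le_top
end Statement11
end
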